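/- Let a, b, c ∈ ℝ³ be mutually orthogonal vectors of equal (positive) magnitude with det(a, b, c) > 0. Then there exists a spinor ψ ∈ ℂ² such that a + ib = ψᵗσψ and c = −ψ̂ᵗσψ. -/

import Mathlib

open Matrix Complex

/-- The first Cartan spinor matrix σ₁ = [[1,0],[0,−1]]. -/
noncomputable def sigma1 : Matrix (Fin 2) (Fin 2) ℂ := !![1, 0; 0, -1]

/-- The second Cartan spinor matrix σ₂ = [[i,0],[0,i]]. -/
noncomputable def sigma2 : Matrix (Fin 2) (Fin 2) ℂ := !![Complex.I, 0; 0, Complex.I]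

/-- The third Cartan spinor matrix σ₃ = [[0,−1],[−1,0]]. -/
noncomputable def sigma3 : Matrix (Fin 2) (Fin 2) ℂ := !![0, -1; -1, 0]

/-- For spinors φ, ψ ∈ ℂ², the vector φᵗσψ ∈ ℂ³ whose j-th component is φᵗσⱼψ. -/
noncomputable def spinorBilin (φ ψ : Fin 2 → ℂ) : Fin 3 → ℂ :=
  ![φ ⬝ᵥ sigma1.mulVec ψ, φ ⬝ᵥ sigma2.mulVec ψ, φ ⬝ᵥ sigma3.mulVec ψ]

/-- The mate (conjugate) of a spinor ψ: ψ̂ = (−ψ̄₂, ψ̄₁). -/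
noncomputable def mate (ψ : Fin 2 → ℂ) : Fin 2 → ℂ :=
  ![-(starRingEnd ℂ) (ψ 1), (starRingEnd ℂ) (ψ 0)]

/-- View a triple of reals as a vector in Euclidean 3-space. -/
noncomputable def toE3 (v : Fin 3 → ℝ) : EuclideanSpace ℝ (Fin 3) := WithLp.toLp 2 v

lemma triad_key (x1 y1 x2 y2 a0 a1 a2 b0 b1 b2 c0 c1 c2 : ℝ)
    (ha0 : a0 = x1^2 - y1^2 - x2^2 + y2^2)
    (hb0 : b0 = 2*x1*y1 - 2*x2*y2)
    (ha1 : a1 = -(2*x1*y1) - 2*x2*y2)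
    (hb1 : b1 = x1^2 - y1^2 + x2^2 - y2^2)
    (ha2 : a2 = -(2*(x1*x2 - y1*y2)))
    (hb2 : b2 = -(2*(x1*y2 + x2*y1)))
    (hac : a0*c0 + a1*c1 + a2*c2 = 0)
    (hbc : b0*c0 + b1*c1 + b2*c2 = 0)
    (hcc : c0^2 + c1^2 + c2^2 = a0^2 + a1^2 + a2^2)
    (hdet : 0 < a0*(b1*c2 - b2*c1) - a1*(b0*c2 - b2*c0) + a2*(b0*c1 - b1*c0)) :
    c0 = 2*(x1*x2 + y1*y2) ∧ c1 = 2*(x1*y2 - x2*y1) ∧ c2 = x1^2 + y1^2 - x2^2 - y2^2 := by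
  subst ha0 hb0 ha1 hb1 ha2 hb2
  set s : ℝ := x1^2 + y1^2 + x2^2 + y2^2 with hs
  set N0 : ℝ := 2*(x1*x2 + y1*y2) with hN0
  set N1 : ℝ := 2*(x1*y2 - x2*y1) with hN1
  set N2 : ℝ := x1^2 + y1^2 - x2^2 - y2^2 with hN2
  suffices h : c0 = N0 ∧ c1 = N1 ∧ c2 = N2 by
    exact ⟨h.1.trans hN0, h.2.1.trans hN1, h.2.2.trans hN2⟩
  have hsN : N0^2 + N1^2 + N2^2 = s^2 := by rw [hN0, hN1, hN2, hs]; ring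
  have hccs : c0^2 + c1^2 + c2^2 = s^2 := by
    rw [hcc, hs]; ring
  have hdc : 0 < s * (c0*N0 + c1*N1 + c2*N2) := by
    have heq : s * (c0*N0 + c1*N1 + c2*N2)
        = (x1^2 - y1^2 - x2^2 + y2^2)*((x1^2 - y1^2 + x2^2 - y2^2)*c2 - (-(2*(x1*y2 + x2*y1)))*c1)
        - (-(2*x1*y1) - 2*x2*y2)*((2*x1*y1 - 2*x2*y2)*c2 - (-(2*(x1*y2 + x2*y1)))*c0)
        + (-(2*(x1*x2 - y1*y2)))*((2*x1*y1 - 2*x2*y2)*c1 - (x1^2 - y1^2 + x2^2 - y2^2)*c0) := by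
      rw [hN0, hN1, hN2, hs]; ring
    linarith [heq ▸ hdet]
  have hs0 : 0 ≤ s := by rw [hs]; positivity
  have hspos : 0 < s := by
    rcases hs0.lt_or_eq with h | h
    · exact h
    · rw [← h] at hdc; simp at hdc
  have hcN : 0 < c0*N0 + c1*N1 + c2*N2 := by
    rcases mul_pos_iff.mp hdc with h | h
    · exact h.2
    · exact absurd h.1 (not_lt.mpr hs0)
  -- cross products vanish (times s)
  have g0 : s * (c1*N2 - c2*N1) = 0 := by
    have : s * (c1*N2 - c2*N1)
        = (x1^2 - y1^2 - x2^2 + y2^2) * ((2*x1*y1 - 2*x2*y2)*c0 + (x1^2 - y1^2 + x2^2 - y2^2)*c1 + (-(2*(x1*y2 + x2*y1)))*c2)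
        - (2*x1*y1 - 2*x2*y2) * ((x1^2 - y1^2 - x2^2 + y2^2)*c0 + (-(2*x1*y1) - 2*x2*y2)*c1 + (-(2*(x1*x2 - y1*y2)))*c2) := by
      rw [hN1, hN2, hs]; ring
    rw [this, hac, hbc]; ring
  have g1 : s * (c2*N0 - c0*N2) = 0 := by
    have : s * (c2*N0 - c0*N2)
        = (-(2*x1*y1) - 2*x2*y2) * ((2*x1*y1 - 2*x2*y2)*c0 + (x1^2 - y1^2 + x2^2 - y2^2)*c1 + (-(2*(x1*y2 + x2*y1)))*c2)
        - (x1^2 - y1^2 + x2^2 - y2^2) * ((x1^2 - y1^2 - x2^2 + y2^2)*c0 + (-(2*x1*y1) - 2*x2*y2)*c1 + (-(2*(x1*x2 - y1*y2)))*c2) := by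
      rw [hN0, hN2, hs]; ring
    rw [this, hac, hbc]; ring
  have g2 : s * (c0*N1 - c1*N0) = 0 := by
    have : s * (c0*N1 - c1*N0)
        = (-(2*(x1*x2 - y1*y2))) * ((2*x1*y1 - 2*x2*y2)*c0 + (x1^2 - y1^2 + x2^2 - y2^2)*c1 + (-(2*(x1*y2 + x2*y1)))*c2)
        - (-(2*(x1*y2 + x2*y1))) * ((x1^2 - y1^2 - x2^2 + y2^2)*c0 + (-(2*x1*y1) - 2*x2*y2)*c1 + (-(2*(x1*x2 - y1*y2)))*c2) := by
      rw [hN0, hN1, hs]; ring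
    rw [this, hac, hbc]; ring
  have x0 : c1*N2 - c2*N1 = 0 := by
    rcases mul_eq_zero.mp g0 with h | h
    · exact absurd h hspos.ne'
    · exact h
  have x1' : c2*N0 - c0*N2 = 0 := by
    rcases mul_eq_zero.mp g1 with h | h
    · exact absurd h hspos.ne'
    · exact h
  have x2' : c0*N1 - c1*N0 = 0 := by
    rcases mul_eq_zero.mp g2 with h | h
    · exact absurd h hspos.ne'
    · exact h
  clear_value s N0 N1 N2
  clear hs hN0 hN1 hN2 hac hbc hcc hdet hdc g0 g1 g2
  -- Lagrange identity
  have lag : (c0*N0 + c1*N1 + c2*N2)^2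
      = (c0^2 + c1^2 + c2^2) * (N0^2 + N1^2 + N2^2)
        - ((c1*N2 - c2*N1)^2 + (c2*N0 - c0*N2)^2 + (c0*N1 - c1*N0)^2) := by ring
  rw [x0, x1', x2', hccs, hsN] at lag
  have hfac : (c0*N0 + c1*N1 + c2*N2 - s^2) * (c0*N0 + c1*N1 + c2*N2 + s^2) = 0 := by
    linear_combination lag
  have hcNs : c0*N0 + c1*N1 + c2*N2 = s^2 := by
    rcases mul_eq_zero.mp hfac with h | h
    · linarith
    · linarith [pow_pos hspos 2]
  have hzero : (c0 - N0)^2 + (c1 - N1)^2 + (c2 - N2)^2 = 0 := by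
    linear_combination hccs + hsN - 2 * hcNs
  have e0 : c0 - N0 = 0 := by
    have h0 : (c0 - N0)^2 = 0 :=
      le_antisymm (by nlinarith [sq_nonneg (c1 - N1), sq_nonneg (c2 - N2)]) (sq_nonneg _)
    exact pow_eq_zero_iff (two_ne_zero) |>.mp h0
  have e1 : c1 - N1 = 0 := by
    have h1 : (c1 - N1)^2 = 0 :=
      le_antisymm (by nlinarith [sq_nonneg (c0 - N0), sq_nonneg (c2 - N2)]) (sq_nonneg _)
    exact pow_eq_zero_iff (two_ne_zero) |>.mp h1
  have e2 : c2 - N2 = 0 := by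
    have h2 : (c2 - N2)^2 = 0 :=
      le_antisymm (by nlinarith [sq_nonneg (c0 - N0), sq_nonneg (c1 - N1)]) (sq_nonneg _)
    exact pow_eq_zero_iff (two_ne_zero) |>.mp h2
  exact ⟨by linarith, by linarith, by linarith⟩

set_option maxHeartbeats 1000000 in
/-- For mutually orthogonal vectors a, b, c ∈ ℝ³ of equal positive magnitude with
det(a,b,c) > 0, there exists a spinor ψ with a + ib = ψᵗσψ and c = −ψ̂ᵗσψ. -/
theorem exists_spinor_of_orthogonal_triad (a b c : Fin 3 → ℝ)
    (hab : inner ℝ (toE3 a) (toE3 b) = (0 : ℝ))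
    (hac : inner ℝ (toE3 a) (toE3 c) = (0 : ℝ))
    (hbc : inner ℝ (toE3 b) (toE3 c) = (0 : ℝ))
    (habn : ‖toE3 a‖ = ‖toE3 b‖) (hbcn : ‖toE3 b‖ = ‖toE3 c‖)
    (hpos : 0 < ‖toE3 a‖)
    (hdet : 0 < (Matrix.of ![a, b, c]).det) :
    ∃ ψ : Fin 2 → ℂ,
      (∀ j, (a j : ℂ) + Complex.I * (b j : ℂ) = spinorBilin ψ ψ j) ∧
      (∀ j, (c j : ℂ) = -(spinorBilin (mate ψ) ψ j)) := by
  -- real component equations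
  have hab' : a 0 * b 0 + a 1 * b 1 + a 2 * b 2 = 0 := by
    simp [toE3, PiLp.inner_apply, RCLike.inner_apply, Fin.sum_univ_three] at hab; linarith
  have hac' : a 0 * c 0 + a 1 * c 1 + a 2 * c 2 = 0 := by
    simp [toE3, PiLp.inner_apply, RCLike.inner_apply, Fin.sum_univ_three] at hac; linarith
  have hbc' : b 0 * c 0 + b 1 * c 1 + b 2 * c 2 = 0 := by
    simp [toE3, PiLp.inner_apply, RCLike.inner_apply, Fin.sum_univ_three] at hbc; linarith
  have hAB : a 0^2 + a 1^2 + a 2^2 = b 0^2 + b 1^2 + b 2^2 := by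
    have := congrArg (·^2) habn
    simp only [EuclideanSpace.real_norm_sq_eq] at this
    simp [toE3, PiLp.inner_apply, RCLike.inner_apply, Fin.sum_univ_three] at this
    nlinarith [this]
  have hCA : c 0^2 + c 1^2 + c 2^2 = a 0^2 + a 1^2 + a 2^2 := by
    have := congrArg (·^2) (habn.trans hbcn)
    simp only [EuclideanSpace.real_norm_sq_eq] at this
    simp [toE3, PiLp.inner_apply, RCLike.inner_apply, Fin.sum_univ_three] at this
    nlinarith [this]
  have hdet' : 0 < a 0*(b 1*c 2 - b 2*c 1) - a 1*(b 0*c 2 - b 2*c 0) + a 2*(b 0*c 1 - b 1*c 0) := by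
    rw [Matrix.det_fin_three] at hdet
    simp at hdet
    nlinarith [hdet]
  -- construct the spinor components
  obtain ⟨ψ1, ψ2, h1, h2, h3⟩ : ∃ ψ1 ψ2 : ℂ,
      ψ1^2 = ((a 0 : ℂ) + I*(b 0) - I*((a 1 : ℂ) + I*(b 1)))/2 ∧
      ψ2^2 = -(((a 0 : ℂ) + I*(b 0)) + I*((a 1 : ℂ) + I*(b 1)))/2 ∧
      ψ1*ψ2 = -((a 2 : ℂ) + I*(b 2))/2 := by
    have hABc : ((a 0 : ℂ))^2 + (a 1 : ℂ)^2 + (a 2 : ℂ)^2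
        = ((b 0 : ℂ))^2 + (b 1 : ℂ)^2 + (b 2 : ℂ)^2 := by exact_mod_cast hAB
    have habc : ((a 0 : ℂ))*(b 0) + (a 1 : ℂ)*(b 1) + (a 2 : ℂ)*(b 2) = 0 := by
      exact_mod_cast hab'
    have hpq : (((a 0 : ℂ) + I*(b 0) - I*((a 1 : ℂ) + I*(b 1)))/2)
          * (-(((a 0 : ℂ) + I*(b 0)) + I*((a 1 : ℂ) + I*(b 1)))/2)
        = (-((a 2 : ℂ) + I*(b 2))/2)^2 := by
      linear_combination (-(1:ℂ)/4) * hABc + (-I/2) * habc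
        + ((-(b 2:ℂ)^2 - (b 1:ℂ)^2 - (b 0:ℂ)^2 + (a 1:ℂ)^2)/4
            + (I/2)*(a 1:ℂ)*(b 1:ℂ) + (I^2/4)*(b 1:ℂ)^2) * Complex.I_sq
    obtain ⟨u, hu⟩ := Complex.isAlgClosed.exists_pow_nat_eq
      (((a 0 : ℂ) + I*(b 0) - I*((a 1 : ℂ) + I*(b 1)))/2) (n := 2) (by norm_num)
    rcases eq_or_ne (((a 0 : ℂ) + I*(b 0) - I*((a 1 : ℂ) + I*(b 1)))/2) 0 with h0 | h0
    · have hr : -((a 2 : ℂ) + I*(b 2))/2 = 0 := by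
        have h2' : (-((a 2 : ℂ) + I*(b 2))/2)^2 = 0 := by rw [← hpq, h0, zero_mul]
        exact pow_eq_zero_iff two_ne_zero |>.mp h2'
      obtain ⟨v, hv⟩ := Complex.isAlgClosed.exists_pow_nat_eq
        (-(((a 0 : ℂ) + I*(b 0)) + I*((a 1 : ℂ) + I*(b 1)))/2) (n := 2) (by norm_num)
      exact ⟨0, v, by simpa using h0.symm, hv, by simpa using hr.symm⟩
    · have hu0 : u ≠ 0 := by
        intro h; rw [h] at hu; exact h0 (by simpa using hu.symm)
      refine ⟨u, (-((a 2 : ℂ) + I*(b 2))/2)/u, hu, ?_, ?_⟩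
      · rw [div_pow, hu, div_eq_iff h0]
        linear_combination -hpq
      · rw [mul_div_assoc', mul_div_cancel_left₀ _ hu0]
  -- the complex equations for a, b
  have hw0 : (a 0 : ℂ) + I*(b 0) = ψ1^2 - ψ2^2 := by linear_combination h2 - h1
  have hw1 : (a 1 : ℂ) + I*(b 1) = I*(ψ1^2 + ψ2^2) := by
    linear_combination -I*h1 - I*h2 + ((a 1 : ℂ) + I*(b 1))*Complex.I_sq
  have hw2 : (a 2 : ℂ) + I*(b 2) = -(ψ1*ψ2) - ψ1*ψ2 := by linear_combination 2*h3
  -- real/imaginary parts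
  have hz0 := hw0; have hz1 := hw1; have hz2 := hw2
  rw [Complex.ext_iff] at hz0 hz1 hz2
  simp only [pow_two, Complex.add_re, Complex.add_im, Complex.sub_re, Complex.sub_im,
    Complex.neg_re, Complex.neg_im, Complex.mul_re, Complex.mul_im, Complex.I_re, Complex.I_im,
    Complex.ofReal_re, Complex.ofReal_im] at hz0 hz1 hz2
  obtain ⟨hc0, hc1, hc2⟩ := triad_key ψ1.re ψ1.im ψ2.re ψ2.im
    (a 0) (a 1) (a 2) (b 0) (b 1) (b 2) (c 0) (c 1) (c 2)
    (by linear_combination hz0.1) (by linear_combination hz0.2)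
    (by linear_combination hz1.1) (by linear_combination hz1.2)
    (by linear_combination hz2.1) (by linear_combination hz2.2)
    hac' hbc' hCA hdet'
  have G10 : (a 0 : ℂ) + I*(b 0) = spinorBilin ![ψ1, ψ2] ![ψ1, ψ2] 0 := by
    simp [spinorBilin, sigma1, mulVec, dotProduct, Fin.sum_univ_two]
    linear_combination h2 - h1
  have G11 : (a 1 : ℂ) + I*(b 1) = spinorBilin ![ψ1, ψ2] ![ψ1, ψ2] 1 := by
    simp [spinorBilin, sigma2, mulVec, dotProduct, Fin.sum_univ_two]
    linear_combination -I*h1 - I*h2 + ((a 1 : ℂ) + I*(b 1))*Complex.I_sq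
  have G12 : (a 2 : ℂ) + I*(b 2) = spinorBilin ![ψ1, ψ2] ![ψ1, ψ2] 2 := by
    simp [spinorBilin, sigma3, mulVec, dotProduct, Fin.sum_univ_two]
    linear_combination 2*h3
  have G20 : (c 0 : ℂ) = -(spinorBilin (mate ![ψ1, ψ2]) ![ψ1, ψ2] 0) := by
    simp [spinorBilin, mate, sigma1, mulVec, dotProduct, Fin.sum_univ_two]
    rw [hc0, Complex.ext_iff]
    simp [Complex.mul_re, Complex.mul_im]
    constructor <;> ring
  have G21 : (c 1 : ℂ) = -(spinorBilin (mate ![ψ1, ψ2]) ![ψ1, ψ2] 1) := by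
    simp [spinorBilin, mate, sigma2, mulVec, dotProduct, Fin.sum_univ_two]
    rw [hc1, Complex.ext_iff]
    simp [Complex.mul_re, Complex.mul_im]
    constructor <;> ring
  have G22 : (c 2 : ℂ) = -(spinorBilin (mate ![ψ1, ψ2]) ![ψ1, ψ2] 2) := by
    simp [spinorBilin, mate, sigma3, mulVec, dotProduct, Fin.sum_univ_two]
    rw [hc2, Complex.ext_iff]
    simp [Complex.mul_re, Complex.mul_im, ← Complex.ofReal_pow]
    constructor <;> ring
  exact ⟨![ψ1, ψ2], fun j => by fin_cases j <;> [exact G10; exact G11; exact G12],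
    fun j => by fin_cases j <;> [exact G20; exact G21; exact G22]⟩
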